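/- Let (Q, ρ, σ, τ) be a string algebra datum with sign maps and let v ∈ Q₀. Then the map sgn : (H_l(v), <_l) → ({0,1}*, <₂) is an order embedding: it is injective, and for all 𝔵, 𝔶 ∈ H_l(v) one has 𝔵 <_l 𝔶 if and only if sgn(𝔵) <₂ sgn(𝔶). -/

import Mathlib

/-- The inorder relation `<₂` on finite binary words: `x <₂ y` iff, writing
`x = w·x'`, `y = w·y'` with `w` the longest common prefix, either `x'` begins
with `0`(=`false`) or `y'` begins with `1`(=`true`). -/
def inlt : List Bool → List Bool → Prop
  | [], [] => False
  | [], b :: _ => b = true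
  | a :: _, [] => a = false
  | a :: x, b :: y => (a = false ∧ b = true) ∨ (a = b ∧ inlt x y)

/-- A string algebra datum: a finite quiver together with a finite nonempty set `ρ`
of blocking paths of length at least 2, satisfying the string algebra conditions. -/
structure StringAlgData where
  /-- the vertices -/
  V : Type
  /-- the arrows -/
  A : Type
  finV : Finite V
  finA : Finite A
  src : A → V
  tgt : A → V
  /-- the blocking relations: a finite set of paths, recorded as lists of arrows
  `[α₁, …, αₙ]` (read right to left, i.e. `s αᵢ = t αᵢ₊₁`) -/
  ρ : Finset (List A)
  ρ_ne : ρ.Nonempty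
  ρ_len : ∀ p ∈ ρ, 2 ≤ p.length
  ρ_path : ∀ p ∈ ρ, p.Chain' (fun a b => src a = tgt b)
  /-- at most two arrows out of any vertex -/
  two_out : ∀ (v : V) (a b c : A), src a = v → src b = v → src c = v → a = b ∨ a = c ∨ b = c
  /-- at most two arrows into any vertex -/
  two_in : ∀ (v : V) (a b c : A), tgt a = v → tgt b = v → tgt c = v → a = b ∨ a = c ∨ b = c
  /-- for every arrow `b`, at most one arrow `a` with `ab ∉ ρ` -/
  unblocked_left : ∀ b a a' : A, src a = tgt b → src a' = tgt b →
    [a, b] ∉ ρ → [a', b] ∉ ρ → a = a'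
  /-- for every arrow `b`, at most one arrow `c` with `bc ∉ ρ` -/
  unblocked_right : ∀ b c c' : A, src b = tgt c → src b = tgt c' →
    [b, c] ∉ ρ → [b, c'] ∉ ρ → c = c'

namespace StringAlgData

variable (D : StringAlgData)

/-- Syllables: direct syllables (`Sum.inl`) and inverse syllables (`Sum.inr`). -/
abbrev Syll := D.A ⊕ D.A

/-- The source of a syllable. -/
def sylSrc : D.Syll → D.V
  | .inl a => D.src a
  | .inr a => D.tgt a

/-- The target of a syllable. -/
def sylTgt : D.Syll → D.V
  | .inl a => D.tgt a
  | .inr a => D.src a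

/-- The inverse of a syllable. -/
def sylInv : D.Syll → D.Syll
  | .inl a => .inr a
  | .inr a => .inl a

/-- A walk: a nonempty word `α₁⋯αₙ` over the syllables (stored as the list
`[α₁, …, αₙ]`) with `s(αᵢ) = t(αᵢ₊₁)` for all `i`. -/
def IsWalk (w : List D.Syll) : Prop :=
  w ≠ [] ∧ w.Chain' (fun α β => D.sylSrc α = D.sylTgt β)

/-- A (nonempty) string: a walk none of whose factors, nor inverse of a factor,
lies in `ρ`, and without a syllable immediately followed by its inverse. -/
def IsString (w : List D.Syll) : Prop :=
  D.IsWalk w ∧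
  (∀ p ∈ D.ρ, ¬ (p.map (Sum.inl : D.A → D.Syll)) <:+: w ∧
    ¬ ((p.map (Sum.inr : D.A → D.Syll)).reverse) <:+: w) ∧
  w.Chain' (fun α β => α ≠ D.sylInv β)

/-- The bit associated to a syllable: `0`(=`false`) for direct, `1`(=`true`) for inverse. -/
def sylBit : D.Syll → Bool
  | .inl _ => false
  | .inr _ => true

/-- The sign sequence of a string in `H_l(v)`: `sgn(1) = ε`, `sgn(α𝔶) = sgn(𝔶)·0` for a
direct syllable `α` and `sgn(α𝔶) = sgn(𝔶)·1` for an inverse syllable `α`. -/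
def sgn : List D.Syll → List Bool
  | [] => []
  | α :: y => sgn y ++ [D.sylBit α]

/-- The value of the extended `σ`-map on a syllable, given sign maps `sgm`, `tau` on arrows. -/
def sylSgm (sgm tau : D.A → ℤ) : D.Syll → ℤ
  | .inl a => sgm a
  | .inr a => tau a

/-- Membership in the left hammock `H_l(v)`: the zero-length string `1_{(v,1)}`
(recorded as the empty list) together with all nonempty strings `𝔵` with
`s(𝔵) = v` and `σ(𝔵) = -1`. -/
def InHl (sgm tau : D.A → ℤ) (v : D.V) (w : List D.Syll) : Prop :=
  w = [] ∨ (D.IsString w ∧ ∃ α, w.getLast? = some α ∧ D.sylSrc α = v ∧ D.sylSgm sgm tau α = -1)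

/-- The hammock order `<_l`: for `𝔵 = 𝔵'𝔴`, `𝔶 = 𝔶'𝔴` with `𝔴` the longest common
suffix, `𝔵 <_l 𝔶` iff the rightmost syllable of `𝔵'` is direct or the rightmost
syllable of `𝔶'` is inverse. -/
def ltl (x y : List D.Syll) : Prop :=
  ∃ w x' y', x = x' ++ w ∧ y = y' ++ w ∧
    (∀ α, ¬ (x'.getLast? = some α ∧ y'.getLast? = some α)) ∧
    ((∃ a, x'.getLast? = some (Sum.inl a)) ∨ (∃ a, y'.getLast? = some (Sum.inr a)))

end StringAlgData




section Aux

lemma eq_nil_or_append {S : Type*} (l : List S) : l = [] ∨ ∃ L b, l = L ++ [b] := by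
  simpa [List.concat_eq_append] using l.eq_nil_or_concat

lemma getLast?_some' {S : Type*} {l : List S} {a : S} (h : l.getLast? = some a) :
    ∃ l', l = l' ++ [a] := by
  rcases eq_nil_or_append l with rfl | ⟨L, b, rfl⟩
  · simp at h
  · rw [List.getLast?_concat] at h
    exact ⟨L, by rw [Option.some_inj.mp h]⟩

lemma inlt_irrefl : ∀ x : List Bool, ¬ inlt x x
  | [] => fun h => h
  | a :: x => by
    rintro (⟨h1, h2⟩ | ⟨-, h⟩)
    · rw [h1] at h2; exact Bool.false_ne_true h2
    · exact inlt_irrefl x h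

lemma inlt_asymm : ∀ x y : List Bool, inlt x y → inlt y x → False
  | [], [] => fun h _ => h
  | [], _ :: _ => fun h1 h2 => by
      simp only [inlt] at h1 h2; rw [h1] at h2; exact Bool.false_ne_true h2.symm
  | _ :: _, [] => fun h1 h2 => by
      simp only [inlt] at h1 h2; rw [h1] at h2; exact Bool.false_ne_true h2
  | a :: x, b :: y => by
    rintro (⟨ha, hb⟩ | ⟨rfl, h1⟩) (⟨hb', ha'⟩ | ⟨hba, h2⟩)
    · rw [ha] at ha'; exact Bool.false_ne_true ha'
    · rw [hba, ha] at hb; exact Bool.false_ne_true hb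
    · rw [hb'] at ha'; exact Bool.false_ne_true ha'
    · exact inlt_asymm x y h1 h2

lemma inlt_append : ∀ w x y : List Bool, inlt (w ++ x) (w ++ y) ↔ inlt x y
  | [], x, y => Iff.rfl
  | a :: w, x, y => by
    show (a = false ∧ a = true) ∨ (a = a ∧ inlt (w ++ x) (w ++ y)) ↔ inlt x y
    rw [inlt_append w x y]
    constructor
    · rintro (⟨h1, h2⟩ | ⟨-, h⟩)
      · rw [h1] at h2; exact absurd h2 (by simp)
      · exact h
    · exact fun h => Or.inr ⟨rfl, h⟩

lemma exists_lcp {S : Type*} : ∀ x y : List S, ∃ w x' y', x = w ++ x' ∧ y = w ++ y' ∧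
    ∀ a : S, ¬ (x'.head? = some a ∧ y'.head? = some a) := by
  intro x
  induction x with
  | nil => exact fun y => ⟨[], [], y, rfl, rfl, by simp⟩
  | cons a xs ih =>
    intro y
    match y with
    | [] => exact ⟨[], a :: xs, [], rfl, rfl, by simp⟩
    | b :: ys =>
      by_cases hab : a = b
      · subst hab
        obtain ⟨w, x', y', h1, h2, h3⟩ := ih ys
        exact ⟨a :: w, x', y', by simp [h1], by simp [h2], h3⟩
      · refine ⟨[], a :: xs, b :: ys, rfl, rfl, ?_⟩
        rintro c ⟨hc1, hc2⟩
        simp only [List.head?_cons, Option.some_inj] at hc1 hc2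
        exact hab (hc1.trans hc2.symm)

lemma exists_lcs {S : Type*} (x y : List S) : ∃ w x' y', x = x' ++ w ∧ y = y' ++ w ∧
    ∀ a : S, ¬ (x'.getLast? = some a ∧ y'.getLast? = some a) := by
  obtain ⟨w, x', y', h1, h2, h3⟩ := exists_lcp x.reverse y.reverse
  refine ⟨w.reverse, x'.reverse, y'.reverse, ?_, ?_, ?_⟩
  · rw [← List.reverse_reverse x, h1, List.reverse_append]
  · rw [← List.reverse_reverse y, h2, List.reverse_append]
  · intro a ha
    rw [List.getLast?_reverse, List.getLast?_reverse] at ha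
    exact h3 a ha

end Aux

namespace StringAlgData

lemma sgn_append (D : StringAlgData) : ∀ x y : List D.Syll,
    D.sgn (x ++ y) = D.sgn y ++ D.sgn x
  | [], y => by simp [sgn]
  | a :: x, y => by simp [sgn, sgn_append D x y]

lemma sgn_concat (D : StringAlgData) (l : List D.Syll) (α : D.Syll) :
    D.sgn (l ++ [α]) = D.sylBit α :: D.sgn l := by
  rw [sgn_append]; rfl

lemma InHl_suffix (D : StringAlgData) (sgm tau : D.A → ℤ) (v : D.V)
    {x s : List D.Syll} (hx : D.InHl sgm tau v x) (hs : s <:+ x) :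
    D.InHl sgm tau v s := by
  rcases eq_or_ne s [] with rfl | hne
  · exact Or.inl rfl
  rcases hx with rfl | ⟨⟨⟨hxn, hxw⟩, hxf, hxi⟩, γ, hxl, h1, h2⟩
  · exact Or.inl (List.suffix_nil.mp hs)
  right
  refine ⟨⟨⟨hne, hxw.suffix hs⟩, fun p hp =>
    ⟨fun h => (hxf p hp).1 (h.trans hs.isInfix), fun h => (hxf p hp).2 (h.trans hs.isInfix)⟩,
    hxi.suffix hs⟩, γ, ?_, h1, h2⟩
  obtain ⟨t, rfl⟩ := hs
  obtain ⟨s', a, rfl⟩ := (eq_nil_or_append s).resolve_left hne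
  have hx' : (t ++ (s' ++ [a])).getLast? = some a := by
    rw [← List.append_assoc]; exact List.getLast?_concat
  rw [hxl] at hx'
  rw [List.getLast?_concat, hx']

/-- Key uniqueness lemma: at most one syllable of each bit extends a string in the hammock. -/
lemma key (D : StringAlgData) (sgm tau : D.A → ℤ)
    (hsrc : ∀ a b, a ≠ b → D.src a = D.src b → sgm a = -sgm b)
    (htgt : ∀ a b, a ≠ b → D.tgt a = D.tgt b → tau a = -tau b)
    (v : D.V) :
    ∀ (α β : D.Syll) (z : List D.Syll), D.InHl sgm tau v (α :: z) → D.InHl sgm tau v (β :: z) →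
      D.sylBit α = D.sylBit β → α = β := by
  intro α β z hx hy hbit
  rcases hx with hx | ⟨⟨⟨-, hxw⟩, hxf, hxi⟩, γx, hxl, hxv, hxs⟩
  · simp at hx
  rcases hy with hy | ⟨⟨⟨-, hyw⟩, hyf, hyi⟩, γy, hyl, hyv, hys⟩
  · simp at hy
  match z with
  | [] =>
    simp only [List.getLast?_singleton, Option.some_inj] at hxl hyl
    subst hxl; subst hyl
    match α, β with
    | .inl a, .inl b =>
      by_contra hne
      have hab : a ≠ b := fun h => hne (by rw [h])
      have := hsrc a b hab (by
        have h1 : D.sylSrc (Sum.inl a) = v := hxv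
        have h2 : D.sylSrc (Sum.inl b) = v := hyv
        simp only [sylSrc] at h1 h2; rw [h1, h2])
      have h1 : sgm a = -1 := hxs
      have h2 : sgm b = -1 := hys
      rw [h1, h2] at this; omega
    | .inr a, .inr b =>
      by_contra hne
      have hab : a ≠ b := fun h => hne (by rw [h])
      have := htgt a b hab (by
        have h1 : D.sylSrc (Sum.inr a) = v := hxv
        have h2 : D.sylSrc (Sum.inr b) = v := hyv
        simp only [sylSrc] at h1 h2; rw [h1, h2])
      have h1 : tau a = -1 := hxs
      have h2 : tau b = -1 := hys
      rw [h1, h2] at this; omega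
    | .inl a, .inr b => simp [sylBit] at hbit
    | .inr a, .inl b => simp [sylBit] at hbit
  | γ :: z' =>
    obtain ⟨hx1, -⟩ := List.isChain_cons_cons.mp hxw
    obtain ⟨hy1, -⟩ := List.isChain_cons_cons.mp hyw
    obtain ⟨hxi1, -⟩ := List.isChain_cons_cons.mp hxi
    obtain ⟨hyi1, -⟩ := List.isChain_cons_cons.mp hyi
    match α, β, γ with
    | .inl a, .inl a', .inl b =>
      have hab : [a, b] ∉ D.ρ := fun h => (hxf _ h).1 ⟨[], z', rfl⟩
      have ha'b : [a', b] ∉ D.ρ := fun h => (hyf _ h).1 ⟨[], z', rfl⟩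
      rw [D.unblocked_left b a a' hx1 hy1 hab ha'b]
    | .inl a, .inl a', .inr b =>
      have ha : a ≠ b := fun h => hxi1 (by rw [h]; rfl)
      have ha' : a' ≠ b := fun h => hyi1 (by rw [h]; rfl)
      have h1 : D.src a = D.src b := hx1
      have h2 : D.src a' = D.src b := hy1
      rcases D.two_out (D.src b) a a' b h1 h2 rfl with h | h | h
      · rw [h]
      · exact absurd h ha
      · exact absurd h ha'
    | .inr a, .inr a', .inl b =>
      have ha : a ≠ b := fun h => hxi1 (by rw [h]; rfl)
      have ha' : a' ≠ b := fun h => hyi1 (by rw [h]; rfl)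
      have h1 : D.tgt a = D.tgt b := hx1
      have h2 : D.tgt a' = D.tgt b := hy1
      rcases D.two_in (D.tgt b) a a' b h1 h2 rfl with h | h | h
      · rw [h]
      · exact absurd h ha
      · exact absurd h ha'
    | .inr a, .inr a', .inr b =>
      have hab : [b, a] ∉ D.ρ := fun h => (hxf _ h).2 ⟨[], z', rfl⟩
      have ha'b : [b, a'] ∉ D.ρ := fun h => (hyf _ h).2 ⟨[], z', rfl⟩
      have h1 : D.src b = D.tgt a := (show D.tgt a = D.src b from hx1).symm
      have h2 : D.src b = D.tgt a' := (show D.tgt a' = D.src b from hy1).symm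
      rw [D.unblocked_right b a a' h1 h2 hab ha'b]
    | .inl _, .inr _, _ => simp [sylBit] at hbit
    | .inr _, .inl _, _ => simp [sylBit] at hbit

lemma sgn_inj (D : StringAlgData) (sgm tau : D.A → ℤ)
    (hsrc : ∀ a b, a ≠ b → D.src a = D.src b → sgm a = -sgm b)
    (htgt : ∀ a b, a ≠ b → D.tgt a = D.tgt b → tau a = -tau b)
    (v : D.V) :
    ∀ x y : List D.Syll, D.InHl sgm tau v x → D.InHl sgm tau v y →
      D.sgn x = D.sgn y → x = y := by
  intro x
  induction x with
  | nil =>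
    intro y _ _ h
    match y with
    | [] => rfl
    | a :: y => simp [sgn] at h
  | cons α x ih =>
    intro y hx hy h
    match y with
    | [] => simp [sgn] at h
    | β :: y' =>
      simp only [sgn] at h
      obtain ⟨h1, h2⟩ := List.append_inj' h rfl
      have hsx : D.InHl sgm tau v x := D.InHl_suffix sgm tau v hx ⟨[α], rfl⟩
      have hsy : D.InHl sgm tau v y' := D.InHl_suffix sgm tau v hy ⟨[β], rfl⟩
      have hxy : x = y' := ih y' hsx hsy h1
      subst hxy
      have hb : D.sylBit α = D.sylBit β := by injection h2
      rw [D.key sgm tau hsrc htgt v α β x hx hy hb]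

lemma ltl_fwd (D : StringAlgData) (sgm tau : D.A → ℤ)
    (hsrc : ∀ a b, a ≠ b → D.src a = D.src b → sgm a = -sgm b)
    (htgt : ∀ a b, a ≠ b → D.tgt a = D.tgt b → tau a = -tau b)
    (v : D.V) :
    ∀ x y : List D.Syll, D.InHl sgm tau v x → D.InHl sgm tau v y →
      D.ltl x y → inlt (D.sgn x) (D.sgn y) := by
  rintro x y hx hy ⟨w, x', y', rfl, rfl, hne, hdisj⟩
  rw [D.sgn_append, D.sgn_append, inlt_append]
  rcases hdisj with ⟨a, ha⟩ | ⟨a, ha⟩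
  · obtain ⟨x'', rfl⟩ := getLast?_some' ha
    rw [D.sgn_concat]
    rcases eq_nil_or_append y' with rfl | ⟨y'', δ, rfl⟩
    · exact rfl
    · have hne' : (Sum.inl a : D.Syll) ≠ δ := by
        rintro rfl
        exact hne (Sum.inl a) ⟨ha, List.getLast?_concat⟩
      have hsx : D.InHl sgm tau v (Sum.inl a :: w) :=
        D.InHl_suffix sgm tau v hx ⟨x'', by simp⟩
      have hsy : D.InHl sgm tau v (δ :: w) :=
        D.InHl_suffix sgm tau v hy ⟨y'', by simp⟩
      rw [D.sgn_concat]
      match δ with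
      | .inl d =>
        exact absurd (D.key sgm tau hsrc htgt v _ _ w hsx hsy rfl) hne'
      | .inr d => exact Or.inl ⟨rfl, rfl⟩
  · obtain ⟨y'', rfl⟩ := getLast?_some' ha
    rw [D.sgn_concat]
    rcases eq_nil_or_append x' with rfl | ⟨x'', δ, rfl⟩
    · exact rfl
    · have hne' : δ ≠ (Sum.inr a : D.Syll) := by
        rintro rfl
        exact hne (Sum.inr a) ⟨List.getLast?_concat, ha⟩
      have hsx : D.InHl sgm tau v (δ :: w) :=
        D.InHl_suffix sgm tau v hx ⟨x'', by simp⟩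
      have hsy : D.InHl sgm tau v (Sum.inr a :: w) :=
        D.InHl_suffix sgm tau v hy ⟨y'', by simp⟩
      rw [D.sgn_concat]
      match δ with
      | .inr d =>
        exact absurd (D.key sgm tau hsrc htgt v _ _ w hsx hsy rfl) hne'
      | .inl d => exact Or.inl ⟨rfl, rfl⟩

end StringAlgData

/-- For a string algebra datum with sign maps and a vertex `v`, the
map `sgn : (H_l(v), <_l) → ({0,1}*, <₂)` is an order embedding: it is injective and
`𝔵 <_l 𝔶 ↔ sgn 𝔵 <₂ sgn 𝔶` for all `𝔵, 𝔶 ∈ H_l(v)`. -/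
theorem sgn_orderEmbedding (D : StringAlgData) (sgm tau : D.A → ℤ)
    (hsgm : ∀ a, sgm a = 1 ∨ sgm a = -1) (htau : ∀ a, tau a = 1 ∨ tau a = -1)
    (hsrc : ∀ a b, a ≠ b → D.src a = D.src b → sgm a = -sgm b)
    (htgt : ∀ a b, a ≠ b → D.tgt a = D.tgt b → tau a = -tau b)
    (hcomp : ∀ a b, D.src a = D.tgt b → [a, b] ∉ D.ρ → sgm a = -tau b)
    (v : D.V) :
    (∀ x y : List D.Syll, D.InHl sgm tau v x → D.InHl sgm tau v y →
      D.sgn x = D.sgn y → x = y) ∧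
    (∀ x y : List D.Syll, D.InHl sgm tau v x → D.InHl sgm tau v y →
      (D.ltl x y ↔ inlt (D.sgn x) (D.sgn y))) := by
  refine ⟨D.sgn_inj sgm tau hsrc htgt v, ?_⟩
  intro x y hx hy
  constructor
  · exact D.ltl_fwd sgm tau hsrc htgt v x y hx hy
  · intro hin
    have hxy : x ≠ y := by
      rintro rfl; exact inlt_irrefl _ hin
    obtain ⟨w, x', y', hxe, hye, hne⟩ := exists_lcs x y
    have tot : D.ltl x y ∨ D.ltl y x := by
      rcases eq_nil_or_append x' with rfl | ⟨x'', α, rfl⟩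
      · rcases eq_nil_or_append y' with rfl | ⟨y'', β, rfl⟩
        · exact absurd (hxe.trans hye.symm) hxy
        · match β with
          | .inl b =>
            refine Or.inr ⟨w, y'' ++ [Sum.inl b], [], hye, hxe, ?_,
              Or.inl ⟨b, List.getLast?_concat⟩⟩
            rintro γ ⟨-, h2⟩; simp at h2
          | .inr b =>
            exact Or.inl ⟨w, [], y'' ++ [Sum.inr b], hxe, hye, hne,
              Or.inr ⟨b, List.getLast?_concat⟩⟩
      · rcases eq_nil_or_append y' with rfl | ⟨y'', β, rfl⟩
        · match α with
          | .inl a =>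
            exact Or.inl ⟨w, x'' ++ [Sum.inl a], [], hxe, hye, hne,
              Or.inl ⟨a, List.getLast?_concat⟩⟩
          | .inr a =>
            refine Or.inr ⟨w, [], x'' ++ [Sum.inr a], hye, hxe, ?_,
              Or.inr ⟨a, List.getLast?_concat⟩⟩
            rintro γ ⟨h1, -⟩; simp at h1
        · match α with
          | .inl a =>
            exact Or.inl ⟨w, x'' ++ [Sum.inl a], y'' ++ [β], hxe, hye, hne,
              Or.inl ⟨a, List.getLast?_concat⟩⟩
          | .inr a =>
            exact Or.inr ⟨w, y'' ++ [β], x'' ++ [Sum.inr a], hye, hxe,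
              fun γ ⟨h1, h2⟩ => hne γ ⟨h2, h1⟩,
              Or.inr ⟨a, List.getLast?_concat⟩⟩
    rcases tot with h | h
    · exact h
    · exact absurd (D.ltl_fwd sgm tau hsrc htgt v y x hy hx h)
        (fun h2 => inlt_asymm _ _ hin h2)
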